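/- Let X_1,...,X_L be independent real random variables with E[X_i] = 0, Var[X_i] = 1, and |X_i| ≤ M for all i. Let ε_0, ε_1 > 0 satisfy ε_1 < 1 and ε_1² > ε_0. Then for every t > 0, P[max |S_{I'}| > t] ≤ 4·exp(−t²(1−ε_1)²/2 / (L + Mtε_1/(3ε_0))), where the maximum is over all subintervals I' ⊆ [L] with |I'| > (1+ε_0)^{−1}L. -/

import Mathlib

open MeasureTheory ProbabilityTheory Filter

private lemma aux_fact (n : ℕ) : 2 * 3 ^ n ≤ (n + 2).factorial := by
  induction n with
  | zero => simp [Nat.factorial]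
  | succ n ih =>
      have : (n + 3).factorial = (n + 3) * (n + 2).factorial := rfl
      calc 2 * 3 ^ (n + 1) = 3 * (2 * 3 ^ n) := by ring
        _ ≤ 3 * (n + 2).factorial := by omega
        _ ≤ (n + 3) * (n + 2).factorial := by
            have := (n+2).factorial_pos; nlinarith
        _ = (n + 3).factorial := rfl

private lemma exp_le_quadratic {u y : ℝ} (hu0 : 0 ≤ u) (hu3 : u < 3) (hy : |y| ≤ u) :
    Real.exp y ≤ 1 + y + y ^ 2 / (2 * (1 - u / 3)) := by
  have hs : Summable (fun n : ℕ => y ^ n / n.factorial) := Real.summable_pow_div_factorial y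
  have hs2 : Summable (fun n : ℕ => y ^ (n + 2) / (n + 2).factorial) :=
    (summable_nat_add_iff 2).mpr hs
  have hexp : Real.exp y = ∑' n : ℕ, y ^ n / n.factorial := by
    rw [Real.exp_eq_exp_ℝ, NormedSpace.exp_eq_tsum_div]
  have hsplit : (∑ i ∈ Finset.range 2, y ^ i / i.factorial) +
      (∑' n : ℕ, y ^ (n + 2) / (n + 2).factorial) = ∑' n : ℕ, y ^ n / n.factorial :=
    Summable.sum_add_tsum_nat_add 2 hs
  have hrange : (∑ i ∈ Finset.range 2, y ^ i / i.factorial) = 1 + y := by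
    simp [Finset.sum_range_succ, Nat.factorial]
  have hgeo : Summable (fun n : ℕ => y ^ 2 / 2 * (u / 3) ^ n) := by
    apply Summable.mul_left
    exact summable_geometric_of_lt_one (by linarith) (by linarith)
  have hterm : ∀ n : ℕ, y ^ (n + 2) / (n + 2).factorial ≤ y ^ 2 / 2 * (u / 3) ^ n := by
    intro n
    have h2 : |y| ^ (n + 2) = y ^ 2 * |y| ^ n := by
      rw [pow_add, sq_abs]; ring
    have h3 : |y| ^ n ≤ u ^ n := pow_le_pow_left₀ (abs_nonneg y) hy n
    have h4 : (2 * 3 ^ n : ℝ) ≤ ((n + 2).factorial : ℝ) := by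
      exact_mod_cast aux_fact n
    have h5 : (0:ℝ) < 2 * 3 ^ n := by positivity
    have h6 : y ^ (n + 2) / (n + 2).factorial ≤ |y| ^ (n + 2) / (2 * 3 ^ n) := by
      apply div_le_div₀ (by positivity) _ h5 h4
      calc y ^ (n+2) ≤ |y ^ (n+2)| := le_abs_self _
        _ = |y| ^ (n+2) := abs_pow y _
    refine h6.trans ?_
    rw [h2]
    have : y ^ 2 * |y| ^ n ≤ y ^ 2 * u ^ n := by nlinarith [sq_nonneg y, pow_nonneg (abs_nonneg y) n]
    calc y ^ 2 * |y| ^ n / (2 * 3 ^ n) ≤ y ^ 2 * u ^ n / (2 * 3 ^ n) := by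
          exact div_le_div_of_nonneg_right this h5.le
      _ = y ^ 2 / 2 * (u / 3) ^ n := by
          rw [div_pow]; ring
    
  have htail : (∑' n : ℕ, y ^ (n + 2) / (n + 2).factorial) ≤ y ^ 2 / (2 * (1 - u / 3)) := by
    calc (∑' n : ℕ, y ^ (n + 2) / (n + 2).factorial) ≤ ∑' n : ℕ, y ^ 2 / 2 * (u / 3) ^ n :=
          Summable.tsum_le_tsum hterm hs2 hgeo
      _ = y ^ 2 / 2 * (1 - u / 3)⁻¹ := by
          rw [tsum_mul_left, tsum_geometric_of_lt_one (by linarith) (by linarith)]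
      _ = y ^ 2 / (2 * (1 - u / 3)) := by
          rw [div_mul_eq_mul_div, mul_comm]
          field_simp
  linarith [hexp ▸ (hsplit.symm), htail, hrange]

private lemma mgf_single {Ω : Type*} [MeasurableSpace Ω] {μ : Measure Ω} [IsProbabilityMeasure μ]
    {X : Ω → ℝ} {M l : ℝ} (hmeas : Measurable X) (hint : Integrable X μ)
    (hmean : ∫ ω, X ω ∂μ = 0) (hvar : variance X μ = 1)
    (hbdd : ∀ᵐ ω ∂μ, |X ω| ≤ M) (hl : 0 ≤ l) (hlM : l * M < 3) :
    ∫ ω, Real.exp (l * X ω) ∂μ ≤ Real.exp (l ^ 2 / (2 * (1 - l * M / 3))) := by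
  have hμ : (μ : Measure Ω) ≠ 0 := IsProbabilityMeasure.ne_zero μ
  haveI : (ae μ).NeBot := ae_neBot.mpr hμ
  obtain ⟨ω₀, hω₀⟩ := hbdd.exists
  have hM0 : 0 ≤ M := (abs_nonneg _).trans hω₀
  have hu3 : l * M < 3 := hlM
  have hden : 0 < 1 - l * M / 3 := by linarith
  set c : ℝ := l ^ 2 / (2 * (1 - l * M / 3)) with hc
  have hc0 : 0 ≤ c := by positivity
  have hℒ2 : MemLp X 2 μ := by
    refine MemLp.of_bound hmeas.aestronglyMeasurable M ?_
    filter_upwards [hbdd] with ω h using by simpa [Real.norm_eq_abs] using h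
  have hX2int : Integrable (fun ω => X ω ^ 2) μ := by
    simpa [sq] using hℒ2.integrable_sq
  have hX2 : ∫ ω, X ω ^ 2 ∂μ = 1 := by
    have := variance_eq_sub hℒ2
    rw [hvar, hmean] at this
    have h2 : ∫ ω, X ω ^ 2 ∂μ - 0 = 1 := by
      simpa [Pi.pow_apply] using this.symm
    linarith
  have hgint : Integrable (fun ω => 1 + l * X ω + X ω ^ 2 * c) μ :=
    ((integrable_const 1).add (hint.const_mul l)).add (hX2int.mul_const c)
  have hexpint : Integrable (fun ω => Real.exp (l * X ω)) μ := by
    refine Integrable.mono' (integrable_const (Real.exp (l * M)))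
      (hmeas.const_mul l).exp.aestronglyMeasurable ?_
    filter_upwards [hbdd] with ω h
    rw [Real.norm_eq_abs, abs_of_pos (Real.exp_pos _)]
    exact Real.exp_le_exp.mpr (by nlinarith [le_abs_self (X ω), abs_nonneg (X ω)])
  have hpt : ∀ᵐ ω ∂μ, Real.exp (l * X ω) ≤ 1 + l * X ω + X ω ^ 2 * c := by
    filter_upwards [hbdd] with ω h
    have hy : |l * X ω| ≤ l * M := by
      rw [abs_mul, abs_of_nonneg hl]
      exact mul_le_mul_of_nonneg_left h hl
    have := exp_le_quadratic (by positivity) hu3 hy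
    calc Real.exp (l * X ω) ≤ 1 + l * X ω + (l * X ω) ^ 2 / (2 * (1 - l * M / 3)) := this
      _ = 1 + l * X ω + X ω ^ 2 * c := by rw [hc]; ring
  calc ∫ ω, Real.exp (l * X ω) ∂μ ≤ ∫ ω, (1 + l * X ω + X ω ^ 2 * c) ∂μ :=
        integral_mono_ae hexpint hgint hpt
    _ = 1 + c := by
        have e1 : ∫ ω, (1 + l * X ω + X ω ^ 2 * c) ∂μ
            = (∫ ω, (1 + l * X ω) ∂μ) + ∫ ω, X ω ^ 2 * c ∂μ :=
          integral_add ((integrable_const 1).add (hint.const_mul l)) (hX2int.mul_const c)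
        have e2 : ∫ ω, (1 + l * X ω) ∂μ = (∫ _ω, (1:ℝ) ∂μ) + ∫ ω, l * X ω ∂μ :=
          integral_add (integrable_const 1) (hint.const_mul l)
        rw [e1, e2, integral_const, integral_mul_const, integral_const_mul, hmean, hX2]
        simp
    _ ≤ Real.exp c := by linarith [Real.add_one_le_exp c]

private lemma one_sided_max {Ω : Type*} [MeasurableSpace Ω] (μ : Measure Ω) [IsProbabilityMeasure μ]
    (L : ℕ) (X : Fin L → Ω → ℝ) (M : ℝ)
    (hmeas : ∀ i, Measurable (X i))
    (hindep : iIndepFun X μ)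
    (hint : ∀ i, Integrable (X i) μ)
    (hmean : ∀ i, ∫ ω, X i ω ∂μ = 0)
    (hvar : ∀ i, variance (X i) μ = 1)
    (hbdd : ∀ i, ∀ᵐ ω ∂μ, |X i ω| ≤ M)
    (hM : 0 ≤ M)
    (m : ℕ) (hmL : m ≤ L) (s : ℝ) (hs : 0 < s) :
    μ {ω | ∃ k ≤ m, s ≤ ∑ i ∈ Finset.univ.filter (fun i : Fin L => (i : ℕ) < k), X i ω}
      ≤ ENNReal.ofReal (Real.exp (-s ^ 2 / (2 * ((m : ℝ) + M * s / 3)))) := by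
  classical
  set S : ℕ → Ω → ℝ :=
    fun k ω => ∑ i ∈ Finset.univ.filter (fun i : Fin L => (i : ℕ) < k), X i ω with hSdef
  -- trivial case m = 0
  rcases Nat.eq_zero_or_pos m with hm0 | hm1
  · subst hm0
    have hempty : {ω | ∃ k ≤ 0, s ≤ S k ω} = (∅ : Set Ω) := by
      ext ω
      simp only [Set.mem_setOf_eq, Set.mem_empty_iff_false, iff_false, not_exists]
      rintro k ⟨hk, hsk⟩
      obtain rfl : k = 0 := Nat.le_zero.mp hk
      have h0 : S 0 ω = 0 := by simp [hSdef]
      rw [h0] at hsk; linarith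
    rw [hempty]
    simp
  -- main case
  have hm1' : (1 : ℝ) ≤ (m : ℝ) := by exact_mod_cast hm1
  set D : ℝ := (m : ℝ) + M * s / 3 with hDdef
  have hDpos : 0 < D := by
    rw [hDdef]; nlinarith [mul_nonneg hM hs.le]
  set l : ℝ := s / D with hldef
  have hl : 0 < l := by positivity
  have hlM : l * M < 3 := by
    rw [hldef, div_mul_eq_mul_div, div_lt_iff₀ hDpos, hDdef]
    nlinarith [mul_nonneg hM hs.le]
  set c : ℝ := l ^ 2 / (2 * (1 - l * M / 3)) with hcdef
  have hfrac : 1 - l * M / 3 = (m : ℝ) / D := by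
    rw [hldef]
    field_simp
    ring

  have hcval : c = s ^ 2 / (2 * (D * m)) := by
    have hmne : (m : ℝ) ≠ 0 := by linarith
    rw [hcdef, hfrac, hldef]
    field_simp
  have hkey_exp : c * m - l * s = -s ^ 2 / (2 * D) := by
    have hmne : (m : ℝ) ≠ 0 := by linarith
    rw [hcval, hldef]
    field_simp
    ring
  -- a.e. boundedness of all variables
  have hball : ∀ᵐ ω ∂μ, ∀ i, |X i ω| ≤ M := (ae_all_iff).mpr hbdd
  -- per-variable mgf bound
  have hmgf : ∀ i : Fin L, ∫ ω, Real.exp (l * X i ω) ∂μ ≤ Real.exp c :=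
    fun i => mgf_single (hmeas i) (hint i) (hmean i) (hvar i) (hbdd i) hl.le hlM
  -- the filtration
  set F : ℕ → MeasurableSpace Ω :=
    fun k => ⨆ i ∈ {i : Fin L | (i : ℕ) < k}, MeasurableSpace.comap (X i) inferInstance
    with hFdef
  have hFle : ∀ k, F k ≤ ‹MeasurableSpace Ω› := fun k =>
    iSup₂_le fun i _ => (hmeas i).comap_le
  have hFmono : Monotone F := by
    intro a b hab
    exact biSup_mono fun i hi => lt_of_lt_of_le hi hab
  set 𝒢 : Filtration ℕ ‹MeasurableSpace Ω› := ⟨F, hFmono, hFle⟩ with h𝒢def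
  have h𝒢 : ∀ k, 𝒢 k = F k := fun _ => rfl
  -- measurability of X i w.r.t. F k for i < k
  have hXFk : ∀ (k : ℕ) (i : Fin L), (i : ℕ) < k → Measurable[F k] (X i) := by
    intro k i hi
    have h1 : MeasurableSpace.comap (X i) inferInstance ≤ F k := by
      exact le_biSup (fun i => MeasurableSpace.comap (X i) inferInstance) hi
    exact (measurable_iff_comap_le.mpr le_rfl).mono h1 le_rfl
  have hSmeasF : ∀ k, Measurable[F k] (S k) := by
    intro k
    apply Finset.measurable_sum
    intro i hi
    exact hXFk k i (by simpa using hi)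
  -- the submartingale
  set f : ℕ → Ω → ℝ := fun k ω => Real.exp (l * S k ω) with hfdef
  have hfmeasF : ∀ k, Measurable[F k] (f k) := fun k =>
    ((hSmeasF k).const_mul l).exp
  have hfmeas : ∀ k, Measurable (f k) := fun k => (hfmeasF k).mono (hFle k) le_rfl
  have hSbound : ∀ᵐ ω ∂μ, ∀ k, S k ω ≤ L * M := by
    filter_upwards [hball] with ω h k
    calc S k ω ≤ ∑ i ∈ Finset.univ.filter (fun i : Fin L => (i : ℕ) < k), M :=
          Finset.sum_le_sum fun i _ => (le_abs_self _).trans (h i)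
      _ = (Finset.univ.filter (fun i : Fin L => (i : ℕ) < k)).card * M := by
          rw [Finset.sum_const, nsmul_eq_mul]
      _ ≤ L * M := by
          have hcard : (Finset.univ.filter (fun i : Fin L => (i : ℕ) < k)).card ≤ L := by
            simpa using Finset.card_filter_le Finset.univ (fun i : Fin L => (i : ℕ) < k)
          have : ((Finset.univ.filter (fun i : Fin L => (i : ℕ) < k)).card : ℝ) ≤ L := by
            exact_mod_cast hcard
          nlinarith
  have hfint : ∀ k, Integrable (f k) μ := by
    intro k
    refine Integrable.mono' (integrable_const (Real.exp (l * (L * M))))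
      (hfmeas k).aestronglyMeasurable ?_
    filter_upwards [hSbound] with ω h
    rw [Real.norm_eq_abs, abs_of_pos (Real.exp_pos _), Real.exp_le_exp]
    exact mul_le_mul_of_nonneg_left (h k) hl.le
  have hfnonneg : ∀ k ω, 0 ≤ f k ω := fun k ω => (Real.exp_pos _).le
  -- single-variable exponential integrability
  have hgint : ∀ i : Fin L, Integrable (fun ω => Real.exp (l * X i ω)) μ := by
    intro i
    refine Integrable.mono' (integrable_const (Real.exp (l * M)))
      ((hmeas i).const_mul l).exp.aestronglyMeasurable ?_
    filter_upwards [hbdd i] with ω h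
    rw [Real.norm_eq_abs, abs_of_pos (Real.exp_pos _), Real.exp_le_exp]
    exact mul_le_mul_of_nonneg_left ((le_abs_self _).trans h) hl.le
  -- key conditional expectation identity for k < L
  have hsplit : ∀ (k : ℕ) (hk : k < L) (ω : Ω),
      S (k + 1) ω = S k ω + X ⟨k, hk⟩ ω := by
    intro k hk ω
    have hset : Finset.univ.filter (fun i : Fin L => (i : ℕ) < k + 1)
        = insert (⟨k, hk⟩ : Fin L) (Finset.univ.filter (fun i : Fin L => (i : ℕ) < k)) := by
      ext i
      simp only [Finset.mem_filter, Finset.mem_univ, true_and, Finset.mem_insert, Fin.ext_iff]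
      omega
    have hnotmem : (⟨k, hk⟩ : Fin L) ∉ Finset.univ.filter (fun i : Fin L => (i : ℕ) < k) := by
      simp
    rw [hSdef]
    simp only
    rw [hset, Finset.sum_insert hnotmem]
    ring
  have hfsplit : ∀ (k : ℕ) (hk : k < L),
      f (k + 1) = fun ω => f k ω * Real.exp (l * X ⟨k, hk⟩ ω) := by
    intro k hk
    funext ω
    rw [hfdef]
    simp only
    rw [hsplit k hk ω, mul_add, Real.exp_add]
  have hindepk : ∀ (k : ℕ) (hk : k < L),
      Indep (MeasurableSpace.comap (X ⟨k, hk⟩) inferInstance) (F k) μ := by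
    intro k hk
    have hiI : iIndep (fun i => MeasurableSpace.comap (X i) inferInstance) μ :=
      hindep.iIndep
    have hIndep := indep_iSup_of_disjoint (fun i => (hmeas i).comap_le) hiI
      (S := {(⟨k, hk⟩ : Fin L)}) (T := {i : Fin L | (i : ℕ) < k})
      (by
        rw [Set.disjoint_singleton_left]
        simp)
    simpa [hFdef] using hIndep
  have hgmeas1 : ∀ (k : ℕ) (hk : k < L),
      StronglyMeasurable[MeasurableSpace.comap (X ⟨k, hk⟩) inferInstance]
        (fun ω => Real.exp (l * X ⟨k, hk⟩ ω)) := by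
    intro k hk
    exact (((measurable_iff_comap_le.mpr le_rfl).const_mul l).exp).stronglyMeasurable
  have hkey : ∀ (k : ℕ) (hk : k < L),
      μ[f (k + 1)|𝒢 k] =ᵐ[μ]
        fun ω => f k ω * ∫ ω', Real.exp (l * X ⟨k, hk⟩ ω') ∂μ := by
    intro k hk
    haveI : SigmaFinite (μ.trim (hFle k)) := by
      have : IsFiniteMeasure (μ.trim (hFle k)) := isFiniteMeasure_trim _
      infer_instance
    set g : Ω → ℝ := fun ω => Real.exp (l * X ⟨k, hk⟩ ω) with hgdef
    have hfg : f (k + 1) = f k * g := by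
      funext ω
      show Real.exp (l * S (k + 1) ω) = Real.exp (l * S k ω) * g ω
      rw [hsplit k hk ω, mul_add, Real.exp_add]
    have h2 : μ[f k * g|𝒢 k] =ᵐ[μ] f k * μ[g|𝒢 k] :=
      condExp_mul_of_stronglyMeasurable_left (hfmeasF k).stronglyMeasurable
        (hfg ▸ hfint (k + 1)) (hgint ⟨k, hk⟩)
    have h3 : μ[g|𝒢 k] =ᵐ[μ] fun _ => ∫ ω', g ω' ∂μ :=
      condExp_indep_eq (hmeas ⟨k, hk⟩).comap_le (hFle k) (hgmeas1 k hk) (hindepk k hk)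
    rw [hfg]
    refine h2.trans ?_
    filter_upwards [h3] with ω hω
    show f k ω * (μ[g|𝒢 k]) ω = f k ω * ∫ ω', g ω' ∂μ
    rw [hω]
  have hgone : ∀ i : Fin L, 1 ≤ ∫ ω, Real.exp (l * X i ω) ∂μ := by
    intro i
    have hle : ∀ ω, 1 + l * X i ω ≤ Real.exp (l * X i ω) := by
      intro ω
      have := Real.add_one_le_exp (l * X i ω)
      linarith
    have hint1 : Integrable (fun ω => 1 + l * X i ω) μ :=
      (integrable_const 1).add ((hint i).const_mul l)
    have := integral_mono hint1 (hgint i) hle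
    have heq : ∫ ω, (1 + l * X i ω) ∂μ = 1 := by
      rw [integral_add (integrable_const 1) ((hint i).const_mul l),
        integral_const, integral_const_mul, hmean i]
      simp
    linarith [heq ▸ this]
  -- submartingale property
  have hadp : StronglyAdapted 𝒢 f := fun k => (hfmeasF k).stronglyMeasurable
  have hsub : Submartingale f 𝒢 μ := by
    refine submartingale_nat hadp hfint ?_
    intro k
    rcases lt_or_ge k L with hk | hk
    · have hk1 := hkey k hk
      filter_upwards [hk1] with ω hω
      rw [hω]
      exact le_mul_of_one_le_right (hfnonneg k ω) (hgone ⟨k, hk⟩)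
    · haveI : SigmaFinite (μ.trim (hFle k)) := by
        have : IsFiniteMeasure (μ.trim (hFle k)) := isFiniteMeasure_trim _
        infer_instance
      have hfeq : f (k + 1) = f k := by
        funext ω
        show Real.exp (l * S (k + 1) ω) = Real.exp (l * S k ω)
        congr 2
        apply Finset.sum_congr _ (fun _ _ => rfl)
        apply Finset.filter_congr
        intro i _
        have := i.isLt
        omega
      rw [hfeq, condExp_of_stronglyMeasurable (hFle k) (hadp k) (hfint k)]
  -- mgf bound for the partial sums
  have hEf : ∀ k, k ≤ L → ∫ ω, f k ω ∂μ ≤ Real.exp (c * k) := by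
    intro k
    induction k with
    | zero =>
        intro _
        have : ∀ ω, f 0 ω = 1 := by
          intro ω
          rw [hfdef]
          simp [hSdef]
        calc ∫ ω, f 0 ω ∂μ = ∫ _ω, (1:ℝ) ∂μ := integral_congr_ae (ae_of_all μ this)
          _ = 1 := by simp
          _ ≤ Real.exp (c * (0:ℕ)) := by simp
    | succ k ih =>
        intro hkL
        have hk : k < L := hkL
        haveI : SigmaFinite (μ.trim (hFle k)) := by
          have : IsFiniteMeasure (μ.trim (hFle k)) := isFiniteMeasure_trim _
          infer_instance
        have h1 : ∫ ω, f (k + 1) ω ∂μ = ∫ ω, (μ[f (k + 1)|𝒢 k]) ω ∂μ :=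
          (integral_condExp (hFle k)).symm
        have h2 : ∫ ω, (μ[f (k + 1)|𝒢 k]) ω ∂μ
            = ∫ ω, f k ω * ∫ ω', Real.exp (l * X ⟨k, hk⟩ ω') ∂μ ∂μ :=
          integral_congr_ae (hkey k hk)
        have h3 : ∫ ω, f k ω * ∫ ω', Real.exp (l * X ⟨k, hk⟩ ω') ∂μ ∂μ
            = (∫ ω, f k ω ∂μ) * ∫ ω', Real.exp (l * X ⟨k, hk⟩ ω') ∂μ :=
          integral_mul_const _ _
        rw [h1, h2, h3]
        have hfknn : 0 ≤ ∫ ω, f k ω ∂μ := integral_nonneg (hfnonneg k)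
        calc (∫ ω, f k ω ∂μ) * ∫ ω', Real.exp (l * X ⟨k, hk⟩ ω') ∂μ
            ≤ Real.exp (c * k) * Real.exp c := by
              refine mul_le_mul (ih hk.le) (hmgf _) ?_ (Real.exp_nonneg _)
              exact integral_nonneg fun ω => (Real.exp_pos _).le
          _ = Real.exp (c * ((k + 1 : ℕ) : ℝ)) := by
              rw [← Real.exp_add]
              congr 1
              push_cast
              ring
  -- Doob's maximal inequality
  set ε : NNReal := Real.toNNReal (Real.exp (l * s)) with hεdef
  have hεcoe : (ε : ℝ) = Real.exp (l * s) := Real.coe_toNNReal _ (Real.exp_pos _).le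
  have hdoob := maximal_ineq hsub (fun k ω => hfnonneg k ω) (ε := ε) m
  set A : Set Ω := {ω | (ε : ℝ) ≤ (Finset.range (m + 1)).sup'
      Finset.nonempty_range_add_one fun k => f k ω} with hAdef
  have hsubset : {ω | ∃ k ≤ m, s ≤ S k ω} ⊆ A := by
    rintro ω ⟨k, hk, hks⟩
    rw [hAdef]
    simp only [Set.mem_setOf_eq]
    refine le_trans ?_ (Finset.le_sup' (fun k => f k ω)
      (Finset.mem_range.mpr (Nat.lt_succ_of_le hk)))
    rw [hεcoe, hfdef]
    simp only
    rw [Real.exp_le_exp]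
    exact mul_le_mul_of_nonneg_left hks hl.le
  have hint2 : ENNReal.ofReal (∫ ω in A, f m ω ∂μ) ≤ ENNReal.ofReal (Real.exp (c * m)) := by
    apply ENNReal.ofReal_le_ofReal
    refine le_trans ?_ (hEf m hmL)
    refine setIntegral_le_integral (hfint m) ?_
    filter_upwards with ω using hfnonneg m ω
  have hεne : (ε : ENNReal) ≠ 0 := by
    simp only [ne_eq, ENNReal.coe_eq_zero]
    rw [hεdef]
    simp [Real.toNNReal_eq_zero, not_le, Real.exp_pos]
  have hεtop : (ε : ENNReal) ≠ ⊤ := ENNReal.coe_ne_top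
  have hmain : μ {ω | ∃ k ≤ m, s ≤ S k ω} ≤ ENNReal.ofReal (Real.exp (c * m)) / ε := by
    rw [ENNReal.le_div_iff_mul_le (Or.inl hεne) (Or.inl hεtop)]
    calc μ {ω | ∃ k ≤ m, s ≤ S k ω} * ε ≤ μ A * ε :=
          mul_le_mul_left (measure_mono hsubset) _
      _ = ε • μ A := by rw [mul_comm]; rfl
      _ ≤ ENNReal.ofReal (∫ ω in A, f m ω ∂μ) := hdoob
      _ ≤ ENNReal.ofReal (Real.exp (c * m)) := hint2
  refine hmain.trans ?_
  have hcoe : (ε : ENNReal) = ENNReal.ofReal (Real.exp (l * s)) := rfl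
  rw [hcoe, ← ENNReal.ofReal_div_of_pos (Real.exp_pos _), ← Real.exp_sub, hkey_exp]

set_option maxHeartbeats 1000000 in
/-- Corollary 2.12 of the paper: let `X_1, ..., X_L` be independent with mean `0`,
variance `1` and `|X_i| ≤ M`, and let `ε₀, ε₁ > 0` satisfy `ε₁ < 1` and `ε₁² > ε₀`.
Then for every `t > 0`, the probability that some subinterval `I' ⊆ [L]` with
`|I'| > (1+ε₀)⁻¹ L` has `|S_{I'}| > t` is at most
`4 exp(-t²(1-ε₁)²/2 / (L + M t ε₁/(3ε₀)))`.  Here the subinterval `I' = (a, b]`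
consists of the indices `a < i ≤ b` and `|I'| = b - a`. -/
theorem maximal_subinterval_bound
    {Ω : Type*} [MeasurableSpace Ω] (μ : Measure Ω) [IsProbabilityMeasure μ]
    (L : ℕ) (X : Fin L → Ω → ℝ) (M : ℝ)
    (hmeas : ∀ i, Measurable (X i))
    (hindep : iIndepFun X μ)
    (hint : ∀ i, Integrable (X i) μ)
    (hmean : ∀ i, ∫ ω, X i ω ∂μ = 0)
    (hvar : ∀ i, variance (X i) μ = 1)
    (hbdd : ∀ i, ∀ᵐ ω ∂μ, |X i ω| ≤ M)
    (ε₀ ε₁ : ℝ) (hε₀ : 0 < ε₀) (hε₁ : 0 < ε₁) (hε₁1 : ε₁ < 1) (hε : ε₀ < ε₁ ^ 2)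
    (t : ℝ) (ht : 0 < t) :
    μ {ω | ∃ a b : ℕ, a ≤ b ∧ b ≤ L ∧ (1 + ε₀)⁻¹ * L < (b : ℝ) - (a : ℝ) ∧
        t < |∑ i ∈ Finset.univ.filter (fun i : Fin L => a ≤ (i : ℕ) ∧ (i : ℕ) < b), X i ω|}
      ≤ ENNReal.ofReal (4 * Real.exp
          (-(t ^ 2 * (1 - ε₁) ^ 2 / 2) / (L + M * t * ε₁ / (3 * ε₀)))) := by
  classical
  -- trivial case L = 0
  rcases Nat.eq_zero_or_pos L with hL0 | hL1
  · subst hL0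
    have hempty : {ω : Ω | ∃ a b : ℕ, a ≤ b ∧ b ≤ 0 ∧ (1 + ε₀)⁻¹ * ((0:ℕ):ℝ) < (b : ℝ) - (a : ℝ) ∧
        t < |∑ i ∈ Finset.univ.filter (fun i : Fin 0 => a ≤ (i : ℕ) ∧ (i : ℕ) < b), X i ω|}
        = ∅ := by
      ext ω
      simp only [Set.mem_setOf_eq, Set.mem_empty_iff_false, iff_false, not_exists]
      rintro a b ⟨hab, hb0, hcond, -⟩
      obtain rfl : b = 0 := Nat.le_zero.mp hb0
      obtain rfl : a = 0 := Nat.le_zero.mp hab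
      norm_num at hcond
    rw [hempty]
    simp
  have hL1' : (1:ℝ) ≤ (L:ℝ) := by exact_mod_cast hL1
  -- basics about M
  have hμ : (μ : Measure Ω) ≠ 0 := IsProbabilityMeasure.ne_zero μ
  haveI : (ae μ).NeBot := ae_neBot.mpr hμ
  set i0 : Fin L := ⟨0, hL1⟩ with hi0
  obtain ⟨ω₀, hω₀⟩ := (hbdd i0).exists
  have hM0 : 0 ≤ M := (abs_nonneg _).trans hω₀
  have hℒ2 : MemLp (X i0) 2 μ := by
    refine MemLp.of_bound (hmeas i0).aestronglyMeasurable M ?_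
    filter_upwards [hbdd i0] with ω h using by simpa [Real.norm_eq_abs] using h
  have hX2 : ∫ ω, X i0 ω ^ 2 ∂μ = 1 := by
    have := variance_eq_sub hℒ2
    rw [hvar i0, hmean i0] at this
    have h2 : ∫ ω, X i0 ω ^ 2 ∂μ - 0 = 1 := by simpa [Pi.pow_apply] using this.symm
    linarith
  have hM2 : 1 ≤ M ^ 2 := by
    have hmono : ∫ ω, X i0 ω ^ 2 ∂μ ≤ ∫ _ω, M ^ 2 ∂μ := by
      refine integral_mono_ae (by simpa [sq] using hℒ2.integrable_sq) (integrable_const _) ?_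
      filter_upwards [hbdd i0] with ω h
      calc X i0 ω ^ 2 = |X i0 ω| ^ 2 := (sq_abs _).symm
        _ ≤ M ^ 2 := by nlinarith [abs_nonneg (X i0 ω)]
    rw [hX2] at hmono
    simpa using hmono
  have hM1 : 1 ≤ M := by nlinarith
  have hMpos : 0 < M := by linarith
  -- set up the four events
  set m₀ : ℕ := Nat.floor (ε₀ * L) with hm₀def
  have hm₀R : (m₀ : ℝ) ≤ ε₀ * L := Nat.floor_le (by positivity)
  have hε₀1 : ε₀ < 1 := lt_trans hε (by nlinarith)
  have hm₀L : m₀ ≤ L := by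
    have : (m₀ : ℝ) ≤ (L : ℝ) := hm₀R.trans (by nlinarith)
    exact_mod_cast this
  set Y : Fin L → Ω → ℝ := fun i ω => -X i ω with hYdef
  have hYmeas : ∀ i, Measurable (Y i) := fun i => (hmeas i).neg
  have hYindep : iIndepFun Y μ :=
    hindep.comp (fun _ => Neg.neg) (fun _ => measurable_neg)
  have hYint : ∀ i, Integrable (Y i) μ := fun i => (hint i).neg
  have hYmean : ∀ i, ∫ ω, Y i ω ∂μ = 0 := by
    intro i
    rw [hYdef]
    simp only
    rw [integral_neg, hmean i, neg_zero]
  have hYvar : ∀ i, variance (Y i) μ = 1 := by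
    intro i
    have : Y i = fun ω => (-1 : ℝ) * X i ω := by funext ω; rw [hYdef]; ring_nf
    rw [this, variance_const_mul, hvar i]
    norm_num
  have hYbdd : ∀ i, ∀ᵐ ω ∂μ, |Y i ω| ≤ M := by
    intro i
    filter_upwards [hbdd i] with ω h
    rw [hYdef]
    simpa using h
  set sA : ℝ := (1 - ε₁) * t with hsAdef
  set sB : ℝ := ε₁ * t with hsBdef
  have hsA : 0 < sA := by rw [hsAdef]; nlinarith
  have hsB : 0 < sB := by rw [hsBdef]; positivity
  set EA : Set Ω := {ω | ∃ k ≤ L, sA ≤ ∑ i ∈ Finset.univ.filter (fun i : Fin L => (i : ℕ) < k), X i ω} with hEAdef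
  set EA' : Set Ω := {ω | ∃ k ≤ L, sA ≤ ∑ i ∈ Finset.univ.filter (fun i : Fin L => (i : ℕ) < k), Y i ω} with hEA'def
  set EB : Set Ω := {ω | ∃ k ≤ m₀, sB ≤ ∑ i ∈ Finset.univ.filter (fun i : Fin L => (i : ℕ) < k), X i ω} with hEBdef
  set EB' : Set Ω := {ω | ∃ k ≤ m₀, sB ≤ ∑ i ∈ Finset.univ.filter (fun i : Fin L => (i : ℕ) < k), Y i ω} with hEB'def
  -- inclusion of the event into the union
  have hsubset : {ω : Ω | ∃ a b : ℕ, a ≤ b ∧ b ≤ L ∧ (1 + ε₀)⁻¹ * L < (b : ℝ) - (a : ℝ) ∧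
      t < |∑ i ∈ Finset.univ.filter (fun i : Fin L => a ≤ (i : ℕ) ∧ (i : ℕ) < b), X i ω|}
      ⊆ (EA ∪ EA') ∪ (EB ∪ EB') := by
    rintro ω ⟨a, b, hab, hbL, hlen, htlt⟩
    -- the interval sum is a difference of prefix sums
    have hsub2 : Finset.univ.filter (fun i : Fin L => (i : ℕ) < a)
        ⊆ Finset.univ.filter (fun i : Fin L => (i : ℕ) < b) := by
      intro i hi
      simp only [Finset.mem_filter, Finset.mem_univ, true_and] at hi ⊢
      omega
    have hdiff : Finset.univ.filter (fun i : Fin L => a ≤ (i : ℕ) ∧ (i : ℕ) < b)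
        = Finset.univ.filter (fun i : Fin L => (i : ℕ) < b)
          \ Finset.univ.filter (fun i : Fin L => (i : ℕ) < a) := by
      ext i
      simp only [Finset.mem_filter, Finset.mem_univ, true_and, Finset.mem_sdiff]
      omega
    set Sb : ℝ := ∑ i ∈ Finset.univ.filter (fun i : Fin L => (i : ℕ) < b), X i ω with hSb
    set Sa : ℝ := ∑ i ∈ Finset.univ.filter (fun i : Fin L => (i : ℕ) < a), X i ω with hSa
    have hTsum : ∑ i ∈ Finset.univ.filter (fun i : Fin L => a ≤ (i : ℕ) ∧ (i : ℕ) < b), X i ω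
        = Sb - Sa := by
      rw [hdiff, Finset.sum_sdiff_eq_sub hsub2]
    rw [hTsum] at htlt
    -- a is small
    have haR : (a : ℝ) ≤ ε₀ * L := by
      have h1 : (b : ℝ) ≤ L := by exact_mod_cast hbL
      have h2 : (0:ℝ) < 1 + ε₀ := by linarith
      have h3 : (a : ℝ) < (L : ℝ) - (1 + ε₀)⁻¹ * L := by linarith
      have h4 : (L : ℝ) - (1 + ε₀)⁻¹ * L = ε₀ / (1 + ε₀) * L := by
        field_simp
        ring
      rw [h4] at h3
      have h5 : ε₀ / (1 + ε₀) * L ≤ ε₀ * L := by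
        refine mul_le_mul_of_nonneg_right ?_ (Nat.cast_nonneg L)
        rw [div_le_iff₀ h2]
        nlinarith [sq_nonneg ε₀]
      linarith
    have ham₀ : a ≤ m₀ := Nat.le_floor haR
    -- negated prefix sums
    have hnegsum : ∀ k : ℕ, ∑ i ∈ Finset.univ.filter (fun i : Fin L => (i : ℕ) < k), Y i ω
        = -∑ i ∈ Finset.univ.filter (fun i : Fin L => (i : ℕ) < k), X i ω := by
      intro k
      rw [hYdef]
      simp [Finset.sum_neg_distrib]
    have hsum : sA + sB = t := by rw [hsAdef, hsBdef]; ring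
    rcases lt_or_ge (Sb - Sa) 0 with hneg | hpos
    · -- Sa - Sb > t
      have h1 : t < Sa - Sb := by rw [abs_of_neg hneg] at htlt; linarith
      rcases le_or_gt sA (-Sb) with hcase | hcase
      · exact Or.inl (Or.inr ⟨b, hbL, by rw [hnegsum b]; linarith⟩)
      · exact Or.inr (Or.inl ⟨a, ham₀, by linarith⟩)
    · -- Sb - Sa > t
      have h1 : t < Sb - Sa := by rw [abs_of_nonneg hpos] at htlt; linarith
      rcases le_or_gt sA Sb with hcase | hcase
      · exact Or.inl (Or.inl ⟨b, hbL, hcase⟩)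
      · exact Or.inr (Or.inr ⟨a, ham₀, by rw [hnegsum a]; linarith⟩)
  -- probability bounds for the four events
  have hA : μ EA ≤ ENNReal.ofReal (Real.exp (-sA ^ 2 / (2 * ((L : ℝ) + M * sA / 3)))) :=
    one_sided_max μ L X M hmeas hindep hint hmean hvar hbdd hM0 L le_rfl sA hsA
  have hA' : μ EA' ≤ ENNReal.ofReal (Real.exp (-sA ^ 2 / (2 * ((L : ℝ) + M * sA / 3)))) :=
    one_sided_max μ L Y M hYmeas hYindep hYint hYmean hYvar hYbdd hM0 L le_rfl sA hsA
  have hB : μ EB ≤ ENNReal.ofReal (Real.exp (-sB ^ 2 / (2 * ((m₀ : ℝ) + M * sB / 3)))) :=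
    one_sided_max μ L X M hmeas hindep hint hmean hvar hbdd hM0 m₀ hm₀L sB hsB
  have hB' : μ EB' ≤ ENNReal.ofReal (Real.exp (-sB ^ 2 / (2 * ((m₀ : ℝ) + M * sB / 3)))) :=
    one_sided_max μ L Y M hYmeas hYindep hYint hYmean hYvar hYbdd hM0 m₀ hm₀L sB hsB
  -- numeric comparisons
  set Est : ℝ := Real.exp (-(t ^ 2 * (1 - ε₁) ^ 2 / 2) / (L + M * t * ε₁ / (3 * ε₀))) with hEst
  set d₂ : ℝ := (L : ℝ) + M * t * ε₁ / (3 * ε₀) with hd₂def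
  have hd₂pos : 0 < d₂ := by
    rw [hd₂def]
    have : 0 < M * t * ε₁ / (3 * ε₀) := by positivity
    linarith
  have hcompA : Real.exp (-sA ^ 2 / (2 * ((L : ℝ) + M * sA / 3))) ≤ Est := by
    rw [hEst]
    apply Real.exp_le_exp.mpr
    have hdA : (0:ℝ) < (L : ℝ) + M * sA / 3 := by
      have : 0 ≤ M * sA / 3 := by positivity
      linarith
    have hle : (L : ℝ) + M * sA / 3 ≤ d₂ := by
      rw [hd₂def, hsAdef]
      have key : ε₀ * (1 - ε₁) ≤ ε₁ := by nlinarith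
      have hMt : (0:ℝ) ≤ M * t := by positivity
      have h2 : M * ((1 - ε₁) * t) / 3 ≤ M * t * ε₁ / (3 * ε₀) := by
        rw [div_le_div_iff₀ (by norm_num) (by positivity)]
        nlinarith [mul_le_mul_of_nonneg_left key hMt]
      linarith
    rw [neg_div, neg_div, neg_le_neg_iff, div_le_div_iff₀ hd₂pos (by linarith : (0:ℝ) < 2 * ((L : ℝ) + M * sA / 3))]
    have hP : sA ^ 2 = t ^ 2 * (1 - ε₁) ^ 2 := by rw [hsAdef]; ring
    rw [hP]
    have step : t ^ 2 * (1 - ε₁) ^ 2 * ((L : ℝ) + M * sA / 3)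
        ≤ t ^ 2 * (1 - ε₁) ^ 2 * d₂ := mul_le_mul_of_nonneg_left hle (by positivity)
    linarith [step]
  have hcompB : Real.exp (-sB ^ 2 / (2 * ((m₀ : ℝ) + M * sB / 3))) ≤ Est := by
    rw [hEst]
    apply Real.exp_le_exp.mpr
    have hm₀0 : (0:ℝ) ≤ (m₀ : ℝ) := Nat.cast_nonneg _
    have hdB : (0:ℝ) < (m₀ : ℝ) + M * sB / 3 := by
      have : 0 < M * sB / 3 := by positivity
      linarith
    have hdB_le : (m₀ : ℝ) + M * sB / 3 ≤ ε₀ * d₂ := by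
      have he : ε₀ * d₂ = ε₀ * L + M * t * ε₁ / 3 := by
        rw [hd₂def]
        field_simp
      have hsB3 : M * sB / 3 = M * t * ε₁ / 3 := by rw [hsBdef]; ring
      linarith [hm₀R]
    have h1 : (1 - ε₁) ^ 2 ≤ 1 := by nlinarith
    have main : t ^ 2 * (1 - ε₁) ^ 2 * ((m₀ : ℝ) + M * sB / 3) ≤ ε₁ ^ 2 * t ^ 2 * d₂ := by
      have ht2 : (0:ℝ) ≤ t ^ 2 := sq_nonneg t
      calc t ^ 2 * (1 - ε₁) ^ 2 * ((m₀ : ℝ) + M * sB / 3)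
          ≤ t ^ 2 * 1 * ((m₀ : ℝ) + M * sB / 3) :=
            mul_le_mul_of_nonneg_right
              (mul_le_mul_of_nonneg_left h1 ht2) hdB.le
        _ = t ^ 2 * ((m₀ : ℝ) + M * sB / 3) := by ring
        _ ≤ t ^ 2 * (ε₀ * d₂) := mul_le_mul_of_nonneg_left hdB_le ht2
        _ ≤ t ^ 2 * (ε₁ ^ 2 * d₂) :=
            mul_le_mul_of_nonneg_left
              (mul_le_mul_of_nonneg_right hε.le hd₂pos.le) ht2
        _ = ε₁ ^ 2 * t ^ 2 * d₂ := by ring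
    rw [neg_div, neg_div, neg_le_neg_iff, div_div,
      div_le_div_iff₀ (by linarith : (0:ℝ) < 2 * d₂) (by linarith : (0:ℝ) < 2 * ((m₀ : ℝ) + M * sB / 3))]
    have hsB2 : sB ^ 2 = ε₁ ^ 2 * t ^ 2 := by rw [hsBdef]; ring
    rw [hsB2]
    linarith [main]
  -- put everything together
  set eA : ℝ := Real.exp (-sA ^ 2 / (2 * ((L : ℝ) + M * sA / 3))) with heA
  set eB : ℝ := Real.exp (-sB ^ 2 / (2 * ((m₀ : ℝ) + M * sB / 3))) with heB
  calc μ {ω : Ω | ∃ a b : ℕ, a ≤ b ∧ b ≤ L ∧ (1 + ε₀)⁻¹ * L < (b : ℝ) - (a : ℝ) ∧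
        t < |∑ i ∈ Finset.univ.filter (fun i : Fin L => a ≤ (i : ℕ) ∧ (i : ℕ) < b), X i ω|}
      ≤ μ ((EA ∪ EA') ∪ (EB ∪ EB')) := measure_mono hsubset
    _ ≤ μ (EA ∪ EA') + μ (EB ∪ EB') := measure_union_le _ _
    _ ≤ (μ EA + μ EA') + (μ EB + μ EB') :=
        add_le_add (measure_union_le _ _) (measure_union_le _ _)
    _ ≤ (ENNReal.ofReal eA + ENNReal.ofReal eA) + (ENNReal.ofReal eB + ENNReal.ofReal eB) :=
        add_le_add (add_le_add hA hA') (add_le_add hB hB')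
    _ = ENNReal.ofReal ((eA + eA) + (eB + eB)) := by
        rw [ENNReal.ofReal_add (by positivity) (by positivity),
          ENNReal.ofReal_add (by positivity) (by positivity),
          ENNReal.ofReal_add (by positivity) (by positivity)]
    _ ≤ ENNReal.ofReal (4 * Real.exp
          (-(t ^ 2 * (1 - ε₁) ^ 2 / 2) / (L + M * t * ε₁ / (3 * ε₀)))) := by
        apply ENNReal.ofReal_le_ofReal
        have h4 : Real.exp (-(t ^ 2 * (1 - ε₁) ^ 2 / 2) / (L + M * t * ε₁ / (3 * ε₀))) = Est := by
          rw [hEst]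
        rw [h4]
        linarith [hcompA, hcompB]
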